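/- Let X_k, k ∈ ℕ, be Banach spaces and X = (Σ_k ⊕ X_k)_0 their c0-sum, i.e. sequences (x_k) with x_k ∈ X_k and ‖x_k‖ → 0, with the supremum norm. Let A be a finitely branching tree and (y_a)_{a∈A} a bounded family in X which is block: there exist pairwise disjoint intervals (I_a)_{a∈A} of ℕ, increasing in the lexicographic order of A, with supp(y_a) ⊆ I_a, and assume y_a ≠ 0 for all a. Let L be the set of all x = Σ_{k=0}^∞ Σ_{|a|=k} λ^{(x)}_a y_a with λ^{(x)}_∅ = 1, λ^{(x)}_a ≥ 0, λ^{(x)}_a = Σ_{b∈S_a} λ^{(x)}_b, and lim_k max{λ^{(x)}_a : |a| = k} = 0. Then on L the weak and norm topologies coincide. -/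

import Mathlib

open Filter Topology Pointwise

/-- A finitely branching tree: a downward-closed set of finite sequences of naturals,
with finitely many elements at each length. -/
def IsFinBranchTree (A : Set (List ℕ)) : Prop :=
  [] ∈ A ∧ (∀ a ∈ A, ∀ n : ℕ, a.take n ∈ A) ∧
    ∀ n : ℕ, {a ∈ A | a.length = n}.Finite

/-- The immediate successors of `a` in `A`. -/
def Succs (A : Set (List ℕ)) (a : List ℕ) : Set (List ℕ) :=
  {b ∈ A | a <+: b ∧ b.length = a.length + 1}

/-- The elements of `A` at level `n`. -/
def Level (A : Set (List ℕ)) (n : ℕ) : Set (List ℕ) :=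
  {a ∈ A | a.length = n}

/-- `(x_a)_{a ∈ A}` is a `δ`-approximate bush with weights `lam` and errors `ε`. -/
def IsApproxBush {X : Type*} [NormedAddCommGroup X] [NormedSpace ℝ X]
    (A : Set (List ℕ)) (x : List ℕ → X) (lam : List ℕ → ℝ)
    (δ : ℝ) (ε : ℕ → ℝ) : Prop :=
  IsFinBranchTree A ∧ (∃ M : ℝ, ∀ a ∈ A, ‖x a‖ ≤ M) ∧
    ∀ a ∈ A,
      (∀ b ∈ Succs A a, δ < ‖x a - x b‖) ∧
      (∀ b ∈ Succs A a, 0 ≤ lam b) ∧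
      (∑ᶠ b ∈ Succs A a, lam b) = 1 ∧
      ‖x a - ∑ᶠ b ∈ Succs A a, lam b • x b‖ < ε a.length

/-- The weight `λ_b^{(a)}` obtained by multiplying the bush weights along the
branch from `a` down to `b`. -/
noncomputable def branchWeight (lam : List ℕ → ℝ) (a b : List ℕ) : ℝ :=
  ∏ i ∈ Finset.Icc (a.length + 1) b.length, lam (b.take i)

/-- The iterated average `x_a^m = ∑_{|b| = m, b ≥ a} λ_b^{(a)} x_b`. -/
noncomputable def iterAvg {X : Type*} [NormedAddCommGroup X] [NormedSpace ℝ X]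
    (A : Set (List ℕ)) (x : List ℕ → X) (lam : List ℕ → ℝ)
    (a : List ℕ) (m : ℕ) : X :=
  ∑ᶠ b ∈ {b ∈ Level A m | a <+: b}, branchWeight lam a b • x b

/-- `x` is the sum of the series `∑_{k=0}^∞ ∑_{|a|=k} f a`, summed by levels. -/
def HasLevelSum {X : Type*} [NormedAddCommGroup X] [NormedSpace ℝ X]
    (A : Set (List ℕ)) (f : List ℕ → X) (x : X) : Prop :=
  Tendsto (fun n => ∑ k ∈ Finset.range n, ∑ᶠ a ∈ Level A k, f a) atTop (𝓝 x)

/-- The weak topology of a topological vector space. -/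
noncomputable def weakTop (X : Type*) [AddCommGroup X] [Module ℝ X]
    [TopologicalSpace X] : TopologicalSpace X :=
  TopologicalSpace.induced (toWeakSpace ℝ X) inferInstance

/-- The relative weak and relative norm topologies on `S` coincide. -/
def TopsCoincide {X : Type*} [NormedAddCommGroup X] [NormedSpace ℝ X]
    (S : Set X) : Prop :=
  TopologicalSpace.induced ((↑) : S → X) (weakTop X) =
    TopologicalSpace.induced ((↑) : S → X) inferInstance

/-- A normalized conditionally determined family on the tree `A`. -/
def CondDetermined (A : Set (List ℕ)) (lam : List ℕ → ℝ) : Prop :=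
  lam [] = 1 ∧ (∀ a ∈ A, 0 ≤ lam a) ∧
    ∀ a ∈ A, lam a = ∑ᶠ b ∈ Succs A a, lam b

/-- A Schauder decomposition of `X`, given by the component projections `P n`,
with decomposition constant `C`. -/
def IsSchauderDecomp {X : Type*} [NormedAddCommGroup X] [NormedSpace ℝ X]
    (P : ℕ → X →L[ℝ] X) (C : ℝ) : Prop :=
  (∀ i j, i ≠ j → ∀ v, P i (P j v) = 0) ∧
  (∀ i, ∀ v, P i (P i v) = P i v) ∧
  (∀ v : X, Tendsto (fun n => ∑ i ∈ Finset.range n, P i v) atTop (𝓝 v)) ∧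
  (∀ n, ∀ v : X, ‖∑ i ∈ Finset.range n, P i v‖ ≤ C * ‖v‖)

/-- Support of a vector with respect to a decomposition. -/
def decompSupp {X : Type*} [NormedAddCommGroup X] [NormedSpace ℝ X]
    (P : ℕ → X →L[ℝ] X) (v : X) : Set ℕ :=
  {n | P n v ≠ 0}

set_option maxHeartbeats 4000000

/-- Auxiliary: open sets are neighborhoods (instance-explicit version). -/
theorem aux_mem_nhds {Y : Type*} [t : TopologicalSpace Y] {U : Set Y} {x : Y}
    (h : IsOpen U) (hx : x ∈ U) : U ∈ @nhds Y t x := h.mem_nhds hx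

/-- Auxiliary: sets defined by finitely many strict inequalities on continuous
functions are open. -/
theorem aux_open_finset {Y : Type*} [TopologicalSpace Y] {ι : Type*} (T : Finset ι)
    (F : ι → Y → ℝ) (c : ι → ℝ) (hF : ∀ a ∈ T, Continuous (F a)) (δ : ℝ) :
    IsOpen {v : Y | ∀ a ∈ T, |F a v - c a| < δ} := by
  have he : {v : Y | ∀ a ∈ T, |F a v - c a| < δ} = ⋂ a ∈ T, (F a) ⁻¹' (Metric.ball (c a) δ) := by
    ext v; simp [Real.dist_eq]
  rw [he]
  exact isOpen_biInter_finset fun a ha => (hF a ha).isOpen_preimage _ Metric.isOpen_ball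

/-- Lemma 2.7, all nodes nonzero: let `X` be a `c₀`-sum of Banach
spaces (encoded by a Schauder decomposition `P` whose norm is the sup of the
component norms), `(y_a)_{a ∈ A}` a bounded block family (supports contained in
pairwise disjoint, lexicographically increasing intervals `I_a`) with
`y_a ≠ 0`. Let `L` be the set of all sums `∑_k ∑_{|a|=k} λ_a y_a` with
`λ_∅ = 1`, `λ_a ≥ 0`, `λ_a = ∑_{b ∈ S_a} λ_b` and
`max{λ_a : |a| = k} → 0`. Then on `L` the weak and norm topologies coincide. -/
theorem stmt13 {X : Type*} [NormedAddCommGroup X] [NormedSpace ℝ X] [CompleteSpace X]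
    (P : ℕ → X →L[ℝ] X) (C : ℝ) (hP : IsSchauderDecomp P C)
    (hc0 : ∀ v : X, ‖v‖ = ⨆ k : ℕ, ‖P k v‖)
    (A : Set (List ℕ)) (hA : IsFinBranchTree A)
    (y : List ℕ → X) (hbdd : ∃ M : ℝ, ∀ a ∈ A, ‖y a‖ ≤ M)
    (I : List ℕ → Finset ℕ)
    (hsupp : ∀ a ∈ A, ∀ n : ℕ, P n (y a) ≠ 0 → n ∈ I a)
    (hdisj : ∀ a ∈ A, ∀ b ∈ A, a ≠ b → Disjoint (I a) (I b))
    (hlex : ∀ a ∈ A, ∀ b ∈ A, List.Lex (· < ·) a b →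
      ∀ i ∈ I a, ∀ j ∈ I b, i < j)
    (hy0 : ∀ a ∈ A, y a ≠ 0)
    (L : Set X)
    (hL : L = {x : X | ∃ lam : List ℕ → ℝ, lam [] = 1 ∧ (∀ a ∈ A, 0 ≤ lam a) ∧
      (∀ a ∈ A, lam a = ∑ᶠ b ∈ Succs A a, lam b) ∧
      (∀ ε > (0 : ℝ), ∃ n₀ : ℕ, ∀ a ∈ A, n₀ ≤ a.length → lam a < ε) ∧
      HasLevelSum A (fun a => lam a • y a) x}) :
    TopsCoincide L := by
  classical
  -- Unpack hypotheses
  obtain ⟨hPorth, hPidem, hPsum, hPC⟩ := hP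
  obtain ⟨hroot, htake, hfin⟩ := hA
  obtain ⟨M₀, hM₀⟩ := hbdd
  set M : ℝ := max M₀ 0 with hMdef
  have hM : ∀ a ∈ A, ‖y a‖ ≤ M := fun a ha => (hM₀ a ha).trans (le_max_left _ _)
  have hM0 : (0:ℝ) ≤ M := le_max_right _ _
  -- levels as finsets
  set lvl : ℕ → Finset (List ℕ) := fun k => (hfin k).toFinset with hlvldef
  have hlvl_mem : ∀ k a, a ∈ lvl k ↔ a ∈ A ∧ a.length = k := by
    intro k a; simp [hlvldef, Set.Finite.mem_toFinset]
  have hLevel_eq : ∀ k, Level A k = ↑(lvl k) := fun k => ((hfin k).coe_toFinset).symm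
  have hfinsumX : ∀ (f : List ℕ → X) (k : ℕ), (∑ᶠ a ∈ Level A k, f a) = ∑ a ∈ lvl k, f a := by
    intro f k; rw [hLevel_eq k, finsum_mem_coe_finset]
  -- partial sums
  set sFun : (List ℕ → ℝ) → ℕ → X :=
    fun w n => ∑ k ∈ Finset.range n, ∑ a ∈ lvl k, w a • y a with hsFundef
  have hLS : ∀ (w : List ℕ → ℝ) (z : X), HasLevelSum A (fun a => w a • y a) z →
      Tendsto (sFun w) atTop (𝓝 z) := by
    intro w z h
    have he : (fun n => ∑ k ∈ Finset.range n, ∑ᶠ a ∈ Level A k, w a • y a) = sFun w := by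
      funext n; exact Finset.sum_congr rfl fun k _ => hfinsumX _ k
    rwa [HasLevelSum, he] at h
  -- basic coordinate facts
  have hPle : ∀ (i : ℕ) (v : X), ‖P i v‖ ≤ ‖v‖ := by
    intro i v
    by_cases hb : BddAbove (Set.range fun k => ‖P k v‖)
    · rw [hc0 v]; exact le_ciSup hb i
    · have h0 : ‖v‖ = 0 := by rw [hc0 v, Real.iSup_of_not_bddAbove hb]
      have hv : v = 0 := norm_eq_zero.mp h0
      simp [hv]
  have hPzero : ∀ a ∈ A, ∀ b ∈ A, ∀ i ∈ I a, b ≠ a → P i (y b) = 0 := by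
    intro a ha b hb i hi hne
    by_contra h
    have hib := hsupp b hb i h
    exact Finset.disjoint_left.mp (hdisj a ha b hb (Ne.symm hne)) hi hib
  have hQ : ∀ a ∈ A, ∑ i ∈ I a, P i (y a) = y a := by
    intro a ha
    have h1 : Tendsto (fun n => ∑ i ∈ Finset.range n, P i (y a)) atTop (𝓝 (y a)) := hPsum (y a)
    set Nbd := (I a).sup id + 1 with hNbd
    have h2 : ∀ n, Nbd ≤ n → ∑ i ∈ Finset.range n, P i (y a) = ∑ i ∈ I a, P i (y a) := by
      intro n hn
      refine (Finset.sum_subset (fun j hj => Finset.mem_range.mpr ?_) ?_).symm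
      · have := Finset.le_sup (f := id) hj
        simp only [id_eq] at this
        omega
      · intro i _ hiI
        by_contra h
        exact hiI (hsupp a ha i h)
    have h3 : Tendsto (fun n => ∑ i ∈ Finset.range n, P i (y a)) atTop
        (𝓝 (∑ i ∈ I a, P i (y a))) := by
      refine Tendsto.congr' ?_ tendsto_const_nhds
      exact Filter.eventually_atTop.mpr ⟨Nbd, fun n hn => (h2 n hn).symm⟩
    exact (tendsto_nhds_unique h3 h1)
  -- block norm bound
  have hblock : ∀ (T : Finset (List ℕ)), ↑T ⊆ A → ∀ (c : List ℕ → ℝ) (K : ℝ), 0 ≤ K →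
      (∀ b ∈ T, 0 ≤ c b) → (∀ b ∈ T, c b * ‖y b‖ ≤ K) →
      ‖∑ b ∈ T, c b • y b‖ ≤ K := by
    intro T hT c K hK hc hcK
    rw [hc0]
    refine Real.iSup_le (fun i => ?_) hK
    have hmap : P i (∑ b ∈ T, c b • y b) = ∑ b ∈ T, c b • P i (y b) := by
      rw [map_sum]; exact Finset.sum_congr rfl fun b _ => (P i).map_smul _ _
    rw [hmap]
    by_cases hex : ∃ b₀ ∈ T, P i (y b₀) ≠ 0
    · obtain ⟨b₀, hb₀T, hb₀⟩ := hex
      have hib₀ : i ∈ I b₀ := hsupp b₀ (hT hb₀T) i hb₀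
      rw [Finset.sum_eq_single_of_mem b₀ hb₀T ?_]
      · rw [norm_smul, Real.norm_eq_abs, abs_of_nonneg (hc b₀ hb₀T)]
        calc c b₀ * ‖P i (y b₀)‖ ≤ c b₀ * ‖y b₀‖ :=
              mul_le_mul_of_nonneg_left (hPle i (y b₀)) (hc b₀ hb₀T)
          _ ≤ K := hcK b₀ hb₀T
      · intro b hbT hne
        rw [hPzero b₀ (hT hb₀T) b (hT hbT) i hib₀ hne, smul_zero]
    · push_neg at hex
      rw [Finset.sum_eq_zero (fun b hb => by rw [hex b hb, smul_zero])]
      simpa using hK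
  -- succs finiteness and finsum conversion
  have hSuccsSub : ∀ a : List ℕ, Succs A a ⊆ {b ∈ A | b.length = a.length + 1} :=
    fun a b hb => ⟨hb.1, hb.2.2⟩
  have hSuccsFin : ∀ a : List ℕ, (Succs A a).Finite :=
    fun a => (hfin (a.length + 1)).subset (hSuccsSub a)
  -- monotonicity of conditionally determined weights
  have hmono : ∀ (w : List ℕ → ℝ), (∀ a ∈ A, 0 ≤ w a) →
      (∀ a ∈ A, w a = ∑ᶠ b ∈ Succs A a, w b) →
      ∀ b ∈ A, ∀ n, n ≤ b.length → w b ≤ w (b.take n) := by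
    intro w hw0 hwc b hb n hn
    have key : ∀ m, n ≤ m → m ≤ b.length → w (b.take m) ≤ w (b.take n) := by
      intro m
      induction m with
      | zero => intro h1 _; have : n = 0 := Nat.le_zero.mp h1; simp [this]
      | succ m ih =>
        intro h1 h2
        rcases Nat.lt_or_ge n (m+1) with h | h
        · have hn' : n ≤ m := Nat.lt_succ_iff.mp h
          have hmA : b.take m ∈ A := htake b hb m
          have hsb : b.take (m+1) ∈ Succs A (b.take m) := by
            refine ⟨htake b hb (m+1), ?_, ?_⟩
            · refine List.prefix_of_prefix_length_le (List.take_prefix m b)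
                (List.take_prefix (m+1) b) ?_
              simp only [List.length_take]; omega
            · simp only [List.length_take]; omega
          have step : w (b.take (m+1)) ≤ w (b.take m) := by
            rcases le_or_gt (w (b.take (m+1))) 0 with h0 | h0
            · exact h0.trans (hw0 _ hmA)
            · rw [hwc _ hmA, ← Set.Finite.coe_toFinset (hSuccsFin (b.take m)),
                finsum_mem_coe_finset]
              refine Finset.single_le_sum (fun c hc => ?_) ?_
              · exact hw0 c (((hSuccsFin (b.take m)).mem_toFinset.mp hc).1)
              · exact (hSuccsFin (b.take m)).mem_toFinset.mpr hsb
          exact step.trans (ih hn' (le_trans (Nat.le_succ m) h2))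
        · have hnm : n = m+1 := le_antisymm h1 h
          simp [hnm]
    have hfin' := key b.length hn le_rfl
    rwa [List.take_length] at hfin'
  -- coordinates of level sums
  have hcoord : ∀ (w : List ℕ → ℝ) (z : X), Tendsto (sFun w) atTop (𝓝 z) →
      ∀ a ∈ A, ∀ i ∈ I a, P i z = w a • P i (y a) := by
    intro w z hz a ha i hi
    have h1 : Tendsto (fun n => P i (sFun w n)) atTop (𝓝 (P i z)) :=
      ((P i).continuous.tendsto z).comp hz
    have h2 : ∀ n, a.length < n → P i (sFun w n) = w a • P i (y a) := by
      intro n hn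
      have hmap : P i (sFun w n) = ∑ k ∈ Finset.range n, ∑ b ∈ lvl k, w b • P i (y b) := by
        rw [hsFundef]
        simp only [map_sum]
        exact Finset.sum_congr rfl fun k _ => Finset.sum_congr rfl fun b _ => (P i).map_smul _ _
      rw [hmap]
      rw [Finset.sum_eq_single_of_mem a.length (Finset.mem_range.mpr hn) ?_]
      · rw [Finset.sum_eq_single_of_mem a ((hlvl_mem _ _).mpr ⟨ha, rfl⟩) ?_]
        intro b hb hba
        have hbA := ((hlvl_mem _ _).mp hb).1
        rw [hPzero a ha b hbA i hi hba, smul_zero]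
      · intro k _ hk
        refine Finset.sum_eq_zero fun b hb => ?_
        obtain ⟨hbA, hbl⟩ := (hlvl_mem _ _).mp hb
        have hba : b ≠ a := fun hh => hk (by rw [← hh, hbl])
        rw [hPzero a ha b hbA i hi hba, smul_zero]
    have h3 : Tendsto (fun n => P i (sFun w n)) atTop (𝓝 (w a • P i (y a))) := by
      refine Tendsto.congr' ?_ tendsto_const_nhds
      exact Filter.eventually_atTop.mpr ⟨a.length + 1, fun n hn => (h2 n hn).symm⟩
    exact tendsto_nhds_unique h1 h3
  -- tail bound
  have htail : ∀ (w : List ℕ → ℝ) (z : X), (∀ a ∈ A, 0 ≤ w a) →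
      (∀ a ∈ A, w a = ∑ᶠ b ∈ Succs A a, w b) →
      Tendsto (sFun w) atTop (𝓝 z) → ∀ (k₀ : ℕ) (c : ℝ), 0 ≤ c →
      (∀ b ∈ lvl k₀, w b ≤ c) → ‖z - sFun w k₀‖ ≤ c * M := by
    intro w z hw0 hwc hz k₀ c hc hwb
    have hbound : ∀ n, k₀ ≤ n → ‖sFun w n - sFun w k₀‖ ≤ c * M := by
      intro n hn
      have hdisjlvl : ∀ k ∈ Finset.Ico k₀ n, ∀ l ∈ Finset.Ico k₀ n, k ≠ l →
          Disjoint (lvl k) (lvl l) := by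
        intro k _ l _ hkl
        refine Finset.disjoint_left.mpr fun b hbk hbl => ?_
        exact hkl (((hlvl_mem _ _).mp hbk).2 ▸ ((hlvl_mem _ _).mp hbl).2 ▸ rfl)
      have hdiff : sFun w n - sFun w k₀ = ∑ b ∈ (Finset.Ico k₀ n).biUnion lvl, w b • y b := by
        rw [Finset.sum_biUnion hdisjlvl, hsFundef]
        rw [eq_comm, Finset.sum_Ico_eq_sub _ hn]
      rw [hdiff]
      refine hblock _ ?_ _ _ (mul_nonneg hc hM0) ?_ ?_
      · intro b hb
        simp only [Finset.coe_biUnion, Set.mem_iUnion] at hb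
        obtain ⟨k, _, hbk⟩ := hb
        exact ((hlvl_mem _ _).mp hbk).1
      · intro b hb
        obtain ⟨k, _, hbk⟩ := Finset.mem_biUnion.mp hb
        exact hw0 b ((hlvl_mem _ _).mp hbk).1
      · intro b hb
        obtain ⟨k, hk, hbk⟩ := Finset.mem_biUnion.mp hb
        obtain ⟨hbA, hbl⟩ := (hlvl_mem _ _).mp hbk
        have hk₀len : k₀ ≤ b.length := by rw [hbl]; exact (Finset.mem_Ico.mp hk).1
        have htk : b.take k₀ ∈ lvl k₀ := by
          refine (hlvl_mem _ _).mpr ⟨htake b hbA k₀, ?_⟩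
          simp [List.length_take]; omega
        have h1 : w b ≤ c := (hmono w hw0 hwc b hbA k₀ hk₀len).trans (hwb _ htk)
        exact mul_le_mul h1 (hM b hbA) (norm_nonneg _) hc
    have h1 : Tendsto (fun n => ‖sFun w n - sFun w k₀‖) atTop (𝓝 ‖z - sFun w k₀‖) :=
      ((hz.sub tendsto_const_nhds).norm)
    exact le_of_tendsto h1 (Filter.eventually_atTop.mpr ⟨k₀, hbound⟩)
  -- norming functionals and weight recovery
  have hfa : ∀ a : List ℕ, ∃ g : X →L[ℝ] ℝ, g (y a) = ‖y a‖ := by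
    intro a
    by_cases h : y a = 0
    · exact ⟨0, by simp [h]⟩
    · obtain ⟨g, _, hg⟩ := exists_dual_vector ℝ (y a) (norm_ne_zero_iff.mpr h)
      exact ⟨g, by exact_mod_cast hg⟩
  choose f hf using hfa
  set g : List ℕ → X →L[ℝ] ℝ :=
    fun a => ‖y a‖⁻¹ • ((f a).comp (∑ i ∈ I a, P i)) with hgdef
  have hgz : ∀ (w : List ℕ → ℝ) (z : X), Tendsto (sFun w) atTop (𝓝 z) →
      ∀ a ∈ A, g a z = w a := by
    intro w z hz a ha
    have h1 : (∑ i ∈ I a, P i) z = w a • y a := by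
      rw [ContinuousLinearMap.sum_apply]
      calc ∑ i ∈ I a, P i z = ∑ i ∈ I a, w a • P i (y a) :=
            Finset.sum_congr rfl fun i hi => hcoord w z hz a ha i hi
        _ = w a • ∑ i ∈ I a, P i (y a) := (Finset.smul_sum).symm
        _ = w a • y a := by rw [hQ a ha]
    have hya : ‖y a‖ ≠ 0 := norm_ne_zero_iff.mpr (hy0 a ha)
    show (‖y a‖⁻¹ • ((f a).comp (∑ i ∈ I a, P i))) z = w a
    rw [ContinuousLinearMap.smul_apply, ContinuousLinearMap.comp_apply, h1, map_smul, hf a]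
    simp only [smul_eq_mul]
    field_simp
  -- weak continuity of continuous linear functionals
  have hweakcont : ∀ (h : X →L[ℝ] ℝ), @Continuous X ℝ (weakTop X) _ h := by
    intro h
    have h1 : Continuous fun v : WeakSpace ℝ X => (topDualPairing ℝ X).flip v h :=
      WeakBilin.eval_continuous _ h
    have h2 : @Continuous X (WeakSpace ℝ X) (weakTop X) _ (toWeakSpace ℝ X) := by
      rw [weakTop]; exact continuous_induced_dom
    exact @Continuous.comp X (WeakSpace ℝ X) ℝ (weakTop X) _ _ _ _ h1 h2
  -- the two inequalities
  refine le_antisymm ?_ ?_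
  swap
  · refine induced_mono ?_
    rw [weakTop]
    have h : Continuous (toWeakSpace ℝ X : X → WeakSpace ℝ X) := by
      have := (toWeakSpaceCLM ℝ X).continuous
      simpa [funext (toWeakSpaceCLM_eq_toWeakSpace (𝕜 := ℝ) (E := X))] using this
    exact continuous_iff_le_induced.mp h
  -- hard direction
  refine le_of_nhds_le_nhds fun p => ?_
  refine le_trans (le_of_eq (@nhds_induced X ↥L (weakTop X) _ p))
    (le_trans ?_ (le_of_eq (@nhds_induced X ↥L _ _ p).symm))
  intro s hs
  rw [Filter.mem_comap] at hs ⊢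
  obtain ⟨t, ht, hts⟩ := hs
  obtain ⟨ε, hε, hball⟩ := Metric.mem_nhds_iff.mp ht
  have hp := hL.subset p.2
  simp only [Set.mem_setOf_eq] at hp
  obtain ⟨lam, hlam1, hlam0, hlamc, hlamdec, hlamsum⟩ := hp
  have hx₀sum : Tendsto (sFun lam) atTop (𝓝 (p : X)) := hLS lam _ hlamsum
  set ε₁ : ℝ := ε / (4 * (M + 1)) with hε₁def
  have hε₁ : 0 < ε₁ := by positivity
  obtain ⟨k₀, hk₀⟩ := hlamdec ε₁ hε₁
  set T₀ : Finset (List ℕ) := (Finset.range (k₀ + 1)).biUnion lvl with hT₀def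
  set Nc : ℕ := T₀.card with hNcdef
  set δ : ℝ := min ε₁ (ε / (4 * (Nc + 1) * (M + 1))) with hδdef
  have hδ : 0 < δ := lt_min hε₁ (div_pos hε (mul_pos (mul_pos (by norm_num) (Nat.cast_add_one_pos Nc)) (by linarith)))
  set U : Set X := {v | ∀ a ∈ T₀, |g a v - g a (p : X)| < δ} with hUdef
  have hUopen : IsOpen[weakTop X] U :=
    @aux_open_finset X (weakTop X) (List ℕ) T₀ (fun a v => g a v) (fun a => g a (p : X))
      (fun a _ => hweakcont (g a)) δ
  have hx₀U : (p : X) ∈ U := by intro a _; simpa using hδ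
  refine ⟨U, aux_mem_nhds (t := weakTop X) hUopen hx₀U, ?_⟩
  intro q hq
  apply hts
  show (q : X) ∈ t
  apply hball
  rw [Metric.mem_ball, dist_eq_norm]
  -- the main estimate
  have hqL := hL.subset q.2
  simp only [Set.mem_setOf_eq] at hqL
  obtain ⟨μ, hμ1, hμ0, hμc, hμdec, hμsum⟩ := hqL
  have hzsum : Tendsto (sFun μ) atTop (𝓝 (q : X)) := hLS μ _ hμsum
  have hT₀A : ∀ a ∈ T₀, a ∈ A := by
    intro a ha
    obtain ⟨k, _, hak⟩ := Finset.mem_biUnion.mp ha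
    exact ((hlvl_mem _ _).mp hak).1
  have hwt : ∀ a ∈ T₀, |μ a - lam a| < δ := by
    intro a ha
    have haA := hT₀A a ha
    have := hq a ha
    rwa [hgz μ _ hzsum a haA, hgz lam _ hx₀sum a haA] at this
  have hlvlT₀ : ∀ k, k ≤ k₀ → ∀ b ∈ lvl k, b ∈ T₀ := by
    intro k hk b hb
    exact Finset.mem_biUnion.mpr ⟨k, Finset.mem_range.mpr (by omega), hb⟩
  have hT1 : ‖(p : X) - sFun lam k₀‖ ≤ ε₁ * M := by
    refine htail lam _ hlam0 hlamc hx₀sum k₀ ε₁ hε₁.le fun b hb => ?_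
    obtain ⟨hbA, hbl⟩ := (hlvl_mem _ _).mp hb
    exact (hk₀ b hbA (by omega)).le
  have hT2 : ‖(q : X) - sFun μ k₀‖ ≤ (ε₁ + δ) * M := by
    refine htail μ _ hμ0 hμc hzsum k₀ (ε₁ + δ) (by linarith) fun b hb => ?_
    obtain ⟨hbA, hbl⟩ := (hlvl_mem _ _).mp hb
    have hbT₀ : b ∈ T₀ := hlvlT₀ k₀ le_rfl b hb
    have h1 : μ b ≤ lam b + |μ b - lam b| := by
      have := le_abs_self (μ b - lam b); linarith
    have h2 := hwt b hbT₀
    have h3 := hk₀ b hbA (by omega)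
    linarith
  have hhead : ‖sFun μ k₀ - sFun lam k₀‖ ≤ Nc * (δ * M) := by
    have hdiff : sFun μ k₀ - sFun lam k₀ =
        ∑ k ∈ Finset.range k₀, ∑ b ∈ lvl k, (μ b - lam b) • y b := by
      rw [hsFundef, ← Finset.sum_sub_distrib]
      refine Finset.sum_congr rfl fun k _ => ?_
      rw [← Finset.sum_sub_distrib]
      exact Finset.sum_congr rfl fun b _ => (sub_smul _ _ _).symm
    rw [hdiff]
    calc ‖∑ k ∈ Finset.range k₀, ∑ b ∈ lvl k, (μ b - lam b) • y b‖
        ≤ ∑ k ∈ Finset.range k₀, ‖∑ b ∈ lvl k, (μ b - lam b) • y b‖ := norm_sum_le _ _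
      _ ≤ ∑ k ∈ Finset.range k₀, ∑ b ∈ lvl k, ‖(μ b - lam b) • y b‖ :=
          Finset.sum_le_sum fun k _ => norm_sum_le _ _
      _ ≤ ∑ k ∈ Finset.range k₀, ∑ b ∈ lvl k, (δ * M) := by
          refine Finset.sum_le_sum fun k hk => Finset.sum_le_sum fun b hb => ?_
          obtain ⟨hbA, hbl⟩ := (hlvl_mem _ _).mp hb
          have hbT₀ : b ∈ T₀ := hlvlT₀ k (by
            have := Finset.mem_range.mp hk; omega) b hb
          rw [norm_smul, Real.norm_eq_abs]
          exact mul_le_mul (hwt b hbT₀).le (hM b hbA) (norm_nonneg _) hδ.le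
      _ = (∑ k ∈ Finset.range k₀, (lvl k).card : ℕ) * (δ * M) := by
          rw [Nat.cast_sum]
          rw [Finset.sum_mul]
          exact Finset.sum_congr rfl fun k _ => by
            rw [Finset.sum_const, nsmul_eq_mul]
      _ ≤ Nc * (δ * M) := by
          have hcard : ∑ k ∈ Finset.range k₀, (lvl k).card ≤ Nc := by
            rw [hNcdef, hT₀def]
            calc ∑ k ∈ Finset.range k₀, (lvl k).card
                = ((Finset.range k₀).biUnion lvl).card := by
                  rw [Finset.card_biUnion]
                  intro k _ l _ hkl
                  refine Finset.disjoint_left.mpr fun b hbk hbl => ?_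
                  exact hkl (((hlvl_mem _ _).mp hbk).2 ▸ ((hlvl_mem _ _).mp hbl).2 ▸ rfl)
              _ ≤ ((Finset.range (k₀+1)).biUnion lvl).card := by
                  refine Finset.card_le_card (Finset.biUnion_subset_biUnion_of_subset_left _ ?_)
                  exact Finset.range_subset_range.mpr (by omega)
          have : ((∑ k ∈ Finset.range k₀, (lvl k).card : ℕ) : ℝ) ≤ (Nc : ℝ) :=
            Nat.cast_le.mpr hcard
          exact mul_le_mul_of_nonneg_right this (mul_nonneg hδ.le hM0)
  -- put it together
  have htri : ‖(q : X) - (p : X)‖ ≤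
      ‖(q : X) - sFun μ k₀‖ + ‖sFun μ k₀ - sFun lam k₀‖ + ‖sFun lam k₀ - (p : X)‖ := by
    have h1 := norm_sub_le_norm_sub_add_norm_sub (q : X) (sFun μ k₀) (p : X)
    have h2 := norm_sub_le_norm_sub_add_norm_sub (sFun μ k₀) (sFun lam k₀) (p : X)
    linarith
  have hT1' : ‖sFun lam k₀ - (p : X)‖ ≤ ε₁ * M := by rwa [norm_sub_rev]
  have hδ1 : δ ≤ ε₁ := min_le_left _ _
  have hδ2 : δ * ((Nc : ℝ) + 1) * (M + 1) ≤ ε / 4 := by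
    have h1 : δ ≤ ε / (4 * (Nc + 1) * (M + 1)) := min_le_right _ _
    have h2 : (0:ℝ) < 4 * ((Nc:ℝ) + 1) * (M + 1) := mul_pos (mul_pos (by norm_num) (Nat.cast_add_one_pos Nc)) (by linarith)
    have h4 : (ε / (4 * ((Nc:ℝ) + 1) * (M + 1))) * (4 * ((Nc:ℝ) + 1) * (M + 1)) = ε :=
      div_mul_cancel₀ _ h2.ne'
    nlinarith [mul_le_mul_of_nonneg_right h1
      (show (0:ℝ) ≤ ((Nc:ℝ) + 1) * (M + 1) from mul_nonneg (Nat.cast_add_one_pos Nc).le (by linarith)), h4]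
  have hε₁M : ε₁ * (M + 1) = ε / 4 := by
    rw [hε₁def]; field_simp
  have hNc0 : (0:ℝ) ≤ (Nc : ℝ) := Nat.cast_nonneg Nc
  calc ‖(q : X) - (p : X)‖
      ≤ (ε₁ + δ) * M + Nc * (δ * M) + ε₁ * M := by linarith
    _ ≤ ε / 4 + ε / 4 + ε / 4 := by nlinarith [hδ.le, hε₁.le, hM0]
    _ < ε := by linarith
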